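/- (Theorem 3.) Let {|ψ¹_j⟩}_{j=1,…,N} and {|ψ²_j⟩}_{j=1,…,N} be unit vectors in ℂ^D, and suppose there exists a deterministic transformation taking |ψ¹_j⟩ to |ψ²_j⟩ for all j: a finite family of operators {A_k} on ℂ^D with Σ_k A_k†A_k = 1 such that A_k|ψ¹_j⟩ = c_{kj}|ψ²_j⟩ for complex scalars c_{kj} with Σ_k |c_{kj}|² = 1 for every j. Then for every probability vector q = (q_j) (q_j ≥ 0, Σ_j q_j = 1), the density matrices ρ₁(q) = Σ_j q_j |ψ¹_j⟩⟨ψ¹_j| and ρ₂(q) = Σ_j q_j |ψ²_j⟩⟨ψ²_j| satisfy the majorization relation λ(ρ₁(q)) ≺ λ(ρ₂(q)). -/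

import Mathlib

open Matrix BigOperators
open scoped ComplexOrder

/-- The sum of the `k` largest entries of `x`, expressed as the supremum of the
sums of `x` over all subsets of cardinality `k`. -/
noncomputable def kMaxSum {D : ℕ} (x : Fin D → ℝ) (k : ℕ) : ℝ :=
  sSup ((fun A : Finset (Fin D) => ∑ i ∈ A, x i) '' {A : Finset (Fin D) | A.card = k})

/-- `x` is majorized by `y` (`x ≺ y`): every partial sum of the `k` largest
entries of `x` is at most the corresponding sum for `y`, and the total sums
coincide. -/
def MajorizedBy {D : ℕ} (x y : Fin D → ℝ) : Prop :=
  (∀ k, k ≤ D → kMaxSum x k ≤ kMaxSum y k) ∧ (∑ i, x i = ∑ i, y i)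

section AuxLemmas

lemma kMaxSum_le {D k : ℕ} (x : Fin D → ℝ) (hk : k ≤ D) {B : ℝ}
    (h : ∀ S : Finset (Fin D), S.card = k → ∑ i ∈ S, x i ≤ B) : kMaxSum x k ≤ B := by
  apply csSup_le
  · obtain ⟨t, -, ht⟩ := Finset.exists_subset_card_eq (s := (Finset.univ : Finset (Fin D)))
      (by simpa using hk)
    exact ⟨_, ⟨t, ht, rfl⟩⟩
  · rintro b ⟨S, hS, rfl⟩
    exact h S hS

lemma le_kMaxSum {D k : ℕ} (x : Fin D → ℝ) (S : Finset (Fin D)) (hS : S.card = k) :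
    ∑ i ∈ S, x i ≤ kMaxSum x k :=
  le_csSup (((Set.toFinite _).image _).bddAbove) ⟨S, hS, rfl⟩

/-- existence of a "top-k" set -/
lemma exists_top_set {D k : ℕ} (y : Fin D → ℝ) (hk : k ≤ D) :
    ∃ S : Finset (Fin D), S.card = k ∧ ∀ i ∈ S, ∀ j ∉ S, y j ≤ y i := by
  induction k with
  | zero => exact ⟨∅, rfl, by simp⟩
  | succ k ih =>
    obtain ⟨S, hScard, hStop⟩ := ih (Nat.le_of_succ_le hk)
    have hne : (Sᶜ : Finset (Fin D)).Nonempty := by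
      rw [← Finset.card_pos, Finset.card_compl, hScard]
      simp only [Fintype.card_fin]
      omega
    obtain ⟨j₀, hj₀mem, hj₀max⟩ := Finset.exists_max_image Sᶜ y hne
    have hj₀S : j₀ ∉ S := by simpa using hj₀mem
    refine ⟨insert j₀ S, by rw [Finset.card_insert_of_notMem hj₀S, hScard], ?_⟩
    intro i hi j hj
    have hjS : j ∉ S := fun h => hj (Finset.mem_insert_of_mem h)
    rcases Finset.mem_insert.mp hi with rfl | hiS
    · exact hj₀max j (by simpa using hjS)
    · exact hStop i hiS j hjS

/-- fractional Ky Fan type bound -/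
lemma frac_le_kMaxSum {D k : ℕ} (y : Fin D → ℝ) (hy : ∀ i, 0 ≤ y i)
    (t : Fin D → ℝ) (ht0 : ∀ m, 0 ≤ t m) (ht1 : ∀ m, t m ≤ 1)
    (htk : ∑ m, t m ≤ (k : ℝ)) (hk : k ≤ D) :
    ∑ m, t m * y m ≤ kMaxSum y k := by
  obtain ⟨S, hScard, hStop⟩ := exists_top_set y hk
  refine le_trans ?_ (le_kMaxSum y S hScard)
  rcases S.eq_empty_or_nonempty with rfl | hSne
  · obtain rfl : k = 0 := by simpa using hScard.symm
    have ht : ∀ m, t m = 0 := by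
      intro m
      have h1 : ∑ m, t m ≤ 0 := by simpa using htk
      have h2 : 0 ≤ ∑ m, t m := Finset.sum_nonneg fun i _ => ht0 i
      exact (Finset.sum_eq_zero_iff_of_nonneg (fun i _ => ht0 i)).mp
        (le_antisymm h1 h2) m (Finset.mem_univ m)
    simp [ht]
  · obtain ⟨i₀, hi₀S, hi₀min⟩ := Finset.exists_min_image S y hSne
    set c := y i₀ with hcdef
    have hc0 : 0 ≤ c := hy i₀
    have hyc : ∀ m ∉ S, y m ≤ c := fun m hm => hStop i₀ hi₀S m hm
    -- split the sum
    have hsplit : ∑ m, t m * y m = ∑ m ∈ S, t m * y m + ∑ m ∈ Sᶜ, t m * y m :=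
      (Finset.sum_add_sum_compl S _).symm
    have h1 : ∑ m ∈ S, t m * y m ≤ ∑ m ∈ S, (y m + (t m - 1) * c) := by
      apply Finset.sum_le_sum
      intro m hm
      have : (t m - 1) * y m ≤ (t m - 1) * c :=
        mul_le_mul_of_nonpos_left (hi₀min m hm) (by linarith [ht1 m])
      nlinarith
    have h2 : ∑ m ∈ Sᶜ, t m * y m ≤ ∑ m ∈ Sᶜ, t m * c := by
      apply Finset.sum_le_sum
      intro m hm
      exact mul_le_mul_of_nonneg_left (hyc m (by simpa using hm)) (ht0 m)
    have key : ∑ m ∈ S, (t m - 1) * c + ∑ m ∈ Sᶜ, t m * c ≤ 0 := by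
      have e0 : ∑ m ∈ S, (t m - 1) * c = ∑ m ∈ S, t m * c - S.card * c := by
        simp only [sub_mul, one_mul, Finset.sum_sub_distrib, Finset.sum_const, nsmul_eq_mul]
      have e1 : ∑ m ∈ S, t m * c + ∑ m ∈ Sᶜ, t m * c = (∑ m, t m) * c := by
        rw [Finset.sum_add_sum_compl S (fun m => t m * c), ← Finset.sum_mul]
      have : ∑ m ∈ S, (t m - 1) * c + ∑ m ∈ Sᶜ, t m * c
          = ((∑ m, t m) - S.card) * c := by
        rw [e0, sub_mul, ← e1]; ring
      rw [this]
      apply mul_nonpos_of_nonpos_of_nonneg _ hc0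
      rw [hScard]
      linarith
    calc ∑ m, t m * y m ≤ ∑ m ∈ S, (y m + (t m - 1) * c) + ∑ m ∈ Sᶜ, t m * c := by
          rw [hsplit]; exact add_le_add h1 h2
      _ = ∑ m ∈ S, y m + (∑ m ∈ S, (t m - 1) * c + ∑ m ∈ Sᶜ, t m * c) := by
          rw [Finset.sum_add_distrib]; ring
      _ ≤ ∑ m ∈ S, y m := by linarith

variable {d ι : Type*} [Fintype d] [DecidableEq d] [Fintype ι] [DecidableEq ι]

lemma eucl_inner_single_single (J J' : ι) :
    (inner ℂ (EuclideanSpace.single J (1:ℂ)) (EuclideanSpace.single J' (1:ℂ)) : ℂ)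
      = if J = J' then 1 else 0 := by
  rw [EuclideanSpace.inner_single_left, EuclideanSpace.single_apply]
  simp [eq_comm]

lemma row_gram (Z : Matrix d ι ℂ) (a b : d) :
    (inner ℂ (∑ J, star (Z a J) • EuclideanSpace.single J (1:ℂ))
           (∑ J, star (Z b J) • EuclideanSpace.single J (1:ℂ)) : ℂ) = (Z * Zᴴ) a b := by
  rw [sum_inner]
  simp only [inner_smul_left, inner_sum, inner_smul_right, eucl_inner_single_single]
  simp only [mul_ite, mul_one, mul_zero, Finset.sum_ite_eq, Finset.mem_univ, if_true]
  simp [Matrix.mul_apply, Matrix.conjTranspose_apply, mul_comm]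

lemma comb_inner (Z : Matrix d ι ℂ) (ca cb : d → ℂ) :
    (inner ℂ (∑ a, ca a • (∑ J, star (Z a J) • EuclideanSpace.single J (1:ℂ)))
           (∑ b, cb b • (∑ J, star (Z b J) • EuclideanSpace.single J (1:ℂ))) : ℂ)
      = ∑ a, ∑ b, star (ca a) * cb b * (Z * Zᴴ) a b := by
  rw [sum_inner]
  congr 1; funext a
  rw [inner_smul_left, inner_sum]
  rw [Finset.mul_sum]
  congr 1; funext b
  rw [inner_smul_right, row_gram, RCLike.star_def]
  ring

/-- If `X Xᴴ = E Eᴴ` then `E = X * S` for a unitary `S`. -/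
lemma ensemble_unitary (X E : Matrix d ι ℂ) (h : X * Xᴴ = E * Eᴴ) :
    ∃ S : Matrix ι ι ℂ, Sᴴ * S = 1 ∧ S * Sᴴ = 1 ∧ E = X * S := by
  classical
  set eV : ι → EuclideanSpace ℂ ι := fun J => EuclideanSpace.single J (1 : ℂ) with heV
  set v : d → EuclideanSpace ℂ ι := fun a => ∑ J, star (X a J) • eV J with hv
  set w : d → EuclideanSpace ℂ ι := fun a => ∑ J, star (E a J) • eV J with hw
  set φ : (d → ℂ) →ₗ[ℂ] EuclideanSpace ℂ ι := Fintype.linearCombination ℂ v with hφ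
  set ψ : (d → ℂ) →ₗ[ℂ] EuclideanSpace ℂ ι := Fintype.linearCombination ℂ w with hψ
  have hφ_apply : ∀ cv, φ cv = ∑ a, cv a • v a := fun cv => Fintype.linearCombination_apply (R := ℂ) (v := v) cv
  have hψ_apply : ∀ cv, ψ cv = ∑ a, cv a • w a := fun cv => Fintype.linearCombination_apply (R := ℂ) (v := w) cv
  have key : ∀ cv : d → ℂ, (inner ℂ (φ cv) (φ cv) : ℂ) = inner ℂ (ψ cv) (ψ cv) := by
    intro cv
    rw [hφ_apply, hψ_apply, hv, hw]
    simp only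
    rw [comb_inner X cv cv, comb_inner E cv cv, h]
  have hnorm : ∀ cv : d → ℂ, ‖φ cv‖ = ‖ψ cv‖ := by
    intro cv
    rw [norm_eq_sqrt_re_inner (𝕜 := ℂ), norm_eq_sqrt_re_inner (𝕜 := ℂ), key]
  have hker : LinearMap.ker φ ≤ LinearMap.ker ψ := by
    intro cv hcv
    rw [LinearMap.mem_ker] at hcv ⊢
    have := key cv
    rw [hcv, inner_zero_left] at this
    exact inner_self_eq_zero.mp this.symm
  -- the isometry on the range of φ
  set L : ↥(LinearMap.range φ) →ₗ[ℂ] EuclideanSpace ℂ ι :=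
    ((LinearMap.ker φ).liftQ ψ hker) ∘ₗ (φ.quotKerEquivRange.symm : _ →ₗ[ℂ] _) with hL
  have hL_apply : ∀ cv : d → ℂ, L ⟨φ cv, LinearMap.mem_range_self φ cv⟩ = ψ cv := by
    intro cv
    have h1 : φ.quotKerEquivRange (Submodule.Quotient.mk cv) = ⟨φ cv, LinearMap.mem_range_self φ cv⟩ := by
      apply Subtype.ext
      exact LinearMap.quotKerEquivRange_apply_mk φ cv
    have h2 : φ.quotKerEquivRange.symm ⟨φ cv, LinearMap.mem_range_self φ cv⟩
        = Submodule.Quotient.mk cv := by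
      rw [← h1, LinearEquiv.symm_apply_apply]
    simp only [hL, LinearMap.comp_apply, LinearEquiv.coe_coe, h2, Submodule.liftQ_apply]
  have hLiso : ∀ x : ↥(LinearMap.range φ), ‖L x‖ = ‖(x : EuclideanSpace ℂ ι)‖ := by
    rintro ⟨x, hx⟩
    obtain ⟨cv, rfl⟩ := hx
    rw [hL_apply cv]
    exact (hnorm cv).symm
  set LI : ↥(LinearMap.range φ) →ₗᵢ[ℂ] EuclideanSpace ℂ ι := ⟨L, hLiso⟩ with hLI
  set T : EuclideanSpace ℂ ι →ₗᵢ[ℂ] EuclideanSpace ℂ ι := LI.extend with hT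
  have hTv : ∀ a, T (v a) = w a := by
    intro a
    have hva : v a = φ (Pi.single a 1) := by
      rw [hφ_apply]
      simp [Pi.single_apply]
    have hwa : w a = ψ (Pi.single a 1) := by
      rw [hψ_apply]
      simp [Pi.single_apply]
    have := LinearIsometry.extend_apply LI ⟨φ (Pi.single a 1), LinearMap.mem_range_self _ _⟩
    rw [hva, hwa, ← hL_apply (Pi.single a 1)]
    exact this
  -- the unitary matrix
  set U : Matrix ι ι ℂ := fun I J => T (eV J) I with hU
  have hUU : Uᴴ * U = 1 := by
    ext J J'
    have hinner : (inner ℂ (T (eV J)) (T (eV J')) : ℂ) = if J = J' then 1 else 0 := by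
      rw [T.inner_map_map, eucl_inner_single_single]
    have hsum : (inner ℂ (T (eV J)) (T (eV J')) : ℂ) = ∑ I, star (T (eV J) I) * (T (eV J') I) := by
      rw [PiLp.inner_apply]
      all_goals exact Finset.sum_congr rfl fun I _ => by rw [RCLike.inner_apply, RCLike.star_def, mul_comm]
    rw [Matrix.mul_apply, Matrix.one_apply, ← hinner, hsum]
    all_goals exact Finset.sum_congr rfl fun I _ => rfl
  have hcomp : ∀ a I, T (v a) I = ∑ J, star (X a J) * U I J := by
    intro a I
    have : T (v a) = ∑ J, star (X a J) • T (eV J) := by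
      rw [hv]
      simp only
      rw [map_sum]
      all_goals exact Finset.sum_congr rfl fun J _ => T.map_smul _ _
    rw [this, WithLp.ofLp_sum, Finset.sum_apply]
    all_goals exact Finset.sum_congr rfl fun J _ => by simp [hU]
  refine ⟨Uᴴ, ?_, ?_, ?_⟩
  · rw [Matrix.conjTranspose_conjTranspose]
    exact mul_eq_one_comm.mp hUU
  · rw [Matrix.conjTranspose_conjTranspose]
    exact hUU
  · ext a I
    have h1 : T (v a) I = w a I := by rw [hTv]
    rw [hcomp] at h1
    have h2 : w a I = star (E a I) := by
      rw [hw]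
      simp only
      rw [WithLp.ofLp_sum, Finset.sum_apply]
      simp [heV, EuclideanSpace.single_apply]
    rw [h2] at h1
    have := congrArg star h1
    simp only [star_sum, star_mul', star_star] at this
    rw [Matrix.mul_apply]
    rw [← this]
    all_goals exact Finset.sum_congr rfl fun J _ => rfl

lemma ensemble_matrix_eq {D N : ℕ} (ψ : Fin N → Fin D → ℂ) (q : Fin N → ℝ) (hq0 : ∀ j, 0 ≤ q j)
    (X : Matrix (Fin D) (Fin D ⊕ Fin N) ℂ)
    (hX : X = fun d J => Sum.elim (fun _ : Fin D => (0:ℂ)) (fun j => (Real.sqrt (q j) : ℂ) * ψ j d) J) :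
    X * Xᴴ = ∑ j, (q j : ℂ) • Matrix.vecMulVec (ψ j) (star (ψ j)) := by
  ext d d'
  rw [Matrix.mul_apply, Matrix.sum_apply, Fintype.sum_sum_type]
  simp only [Matrix.conjTranspose_apply]
  subst hX
  simp only [Matrix.conjTranspose_apply, Sum.elim_inl, Sum.elim_inr, star_zero, mul_zero,
    Finset.sum_const_zero, zero_add, star_mul', Complex.star_def, Complex.conj_ofReal,
    Matrix.smul_apply, Matrix.vecMulVec_apply, Pi.star_apply, smul_eq_mul]
  congr 1; funext j
  have h : (Real.sqrt (q j) : ℂ) * Real.sqrt (q j) = (q j : ℂ) := by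
    rw [← Complex.ofReal_mul, Real.mul_self_sqrt (hq0 j)]
  calc (Real.sqrt (q j) : ℂ) * ψ j d * ((Real.sqrt (q j) : ℂ) * (starRingEnd ℂ) (ψ j d'))
      = ((Real.sqrt (q j) : ℂ) * Real.sqrt (q j)) * (ψ j d * (starRingEnd ℂ) (ψ j d')) := by ring
    _ = (q j : ℂ) * (ψ j d * (starRingEnd ℂ) (ψ j d')) := by rw [h]

lemma inner_transfer {D N M : ℕ} (ψ1 ψ2 : Fin N → (Fin D → ℂ))
    (A : Fin M → Matrix (Fin D) (Fin D) ℂ) (c : Fin M → Fin N → ℂ)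
    (hA1 : ∑ k, (A k)ᴴ * A k = 1)
    (hAct : ∀ k j, (A k) *ᵥ ψ1 j = c k j • ψ2 j) (j j' : Fin N) :
    star (ψ1 j) ⬝ᵥ ψ1 j' = (∑ k, star (c k j) * c k j') * (star (ψ2 j) ⬝ᵥ ψ2 j') := by
  have h0 : star (ψ1 j) ⬝ᵥ ψ1 j' = star (ψ1 j) ⬝ᵥ ((∑ k, (A k)ᴴ * A k) *ᵥ ψ1 j') := by
    rw [hA1, Matrix.one_mulVec]
  have h1 : (∑ k, (A k)ᴴ * A k) *ᵥ ψ1 j' = ∑ k, ((A k)ᴴ * A k) *ᵥ ψ1 j' := by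
    ext i
    simp only [Matrix.mulVec, dotProduct, Matrix.sum_apply, Finset.sum_mul,
      Finset.sum_apply]
    exact Finset.sum_comm
  have h2 : star (ψ1 j) ⬝ᵥ (∑ k, ((A k)ᴴ * A k) *ᵥ ψ1 j')
      = ∑ k, star (ψ1 j) ⬝ᵥ (((A k)ᴴ * A k) *ᵥ ψ1 j') := by
    simp only [dotProduct, Finset.sum_apply, Finset.mul_sum]
    exact Finset.sum_comm
  rw [h0, h1, h2]
  have h3 : ∀ k, star (ψ1 j) ⬝ᵥ (((A k)ᴴ * A k) *ᵥ ψ1 j')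
      = star (c k j) * c k j' * (star (ψ2 j) ⬝ᵥ ψ2 j') := by
    intro k
    rw [← Matrix.mulVec_mulVec, Matrix.dotProduct_mulVec, ← Matrix.star_mulVec,
      hAct k j, hAct k j']
    rw [star_smul, smul_dotProduct, dotProduct_smul]
    simp only [smul_eq_mul, star_trivial]
    ring
  rw [Finset.sum_congr rfl fun k _ => h3 k, ← Finset.sum_mul]

lemma spectral_ensemble {D N : ℕ} (ρ : Matrix (Fin D) (Fin D) ℂ) (h : ρ.IsHermitian)
    (hnn : ∀ i, 0 ≤ h.eigenvalues i) (E : Matrix (Fin D) (Fin D ⊕ Fin N) ℂ)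
    (hE : E = fun d J => Sum.elim (fun i => ((h.eigenvectorUnitary : Matrix (Fin D) (Fin D) ℂ) *
      diagonal (fun i' => (Real.sqrt (h.eigenvalues i') : ℂ))) d i) (fun _ => 0) J) :
    E * Eᴴ = ρ ∧ Eᴴ * E = diagonal (fun J => ((Sum.elim h.eigenvalues (fun _ => 0) J : ℝ) : ℂ)) := by
  set U : Matrix (Fin D) (Fin D) ℂ := (h.eigenvectorUnitary : Matrix (Fin D) (Fin D) ℂ) with hU
  set dia : Matrix (Fin D) (Fin D) ℂ := diagonal (fun i' => (Real.sqrt (h.eigenvalues i') : ℂ))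
    with hdia
  set B : Matrix (Fin D) (Fin D) ℂ := U * dia with hB
  have hUU : Uᴴ * U = 1 := by
    rw [← Matrix.star_eq_conjTranspose]
    exact (Matrix.mem_unitaryGroup_iff').mp h.eigenvectorUnitary.2
  have hdd : dia * diaᴴ = diagonal (fun i => (h.eigenvalues i : ℂ)) := by
    rw [hdia, Matrix.diagonal_conjTranspose, Matrix.diagonal_mul_diagonal]
    refine congrArg Matrix.diagonal (funext fun i => ?_)
    simp only [Pi.star_apply, Complex.star_def, Complex.conj_ofReal]
    rw [← Complex.ofReal_mul, Real.mul_self_sqrt (hnn i)]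
  have hdd' : diaᴴ * dia = diagonal (fun i => (h.eigenvalues i : ℂ)) := by
    rw [hdia, Matrix.diagonal_conjTranspose, Matrix.diagonal_mul_diagonal]
    refine congrArg Matrix.diagonal (funext fun i => ?_)
    simp only [Pi.star_apply, Complex.star_def, Complex.conj_ofReal]
    rw [← Complex.ofReal_mul, Real.mul_self_sqrt (hnn i)]
  have hspec : ρ = U * diagonal (fun i => (h.eigenvalues i : ℂ)) * Uᴴ := by
    simpa [Function.comp_def, Matrix.star_eq_conjTranspose] using h.spectral_theorem
  have hBB : B * Bᴴ = ρ := by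
    rw [hB, Matrix.conjTranspose_mul, Matrix.mul_assoc, ← Matrix.mul_assoc dia _ _, hdd,
      ← Matrix.mul_assoc, ← hspec]
  have hBdiag : Bᴴ * B = diagonal (fun i => (h.eigenvalues i : ℂ)) := by
    rw [hB, Matrix.conjTranspose_mul, Matrix.mul_assoc, ← Matrix.mul_assoc Uᴴ U dia, hUU,
      Matrix.one_mul, hdd']
  constructor
  · ext d d'
    rw [Matrix.mul_apply, Fintype.sum_sum_type, ← hBB, Matrix.mul_apply]
    simp only [Matrix.conjTranspose_apply]; simp [hE, Matrix.conjTranspose_apply]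
  · ext J J'
    match J, J' with
    | Sum.inl i, Sum.inl i' =>
      rw [Matrix.mul_apply]
      have : ∑ d, Eᴴ (Sum.inl i) d * E d (Sum.inl i') = (Bᴴ * B) i i' := by
        rw [Matrix.mul_apply]
        simp only [Matrix.conjTranspose_apply]; simp [hE, Matrix.conjTranspose_apply]
      rw [this, hBdiag]
      by_cases hii : i = i' <;> simp [Matrix.diagonal_apply, hii]
    | Sum.inl i, Sum.inr j =>
      rw [Matrix.mul_apply]
      simp only [Matrix.conjTranspose_apply]; simp [hE, Matrix.conjTranspose_apply]
    | Sum.inr j, Sum.inl i =>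
      rw [Matrix.mul_apply]
      simp only [Matrix.conjTranspose_apply]; simp [hE, Matrix.conjTranspose_apply]
    | Sum.inr j, Sum.inr j' =>
      rw [Matrix.mul_apply]
      by_cases hjj : j = j' <;> (simp only [Matrix.conjTranspose_apply]; simp [hE, Matrix.conjTranspose_apply, Matrix.diagonal_apply, hjj])

lemma diagSumC {ι : Type} [Fintype ι] [DecidableEq ι] {M : ℕ} (f : Fin M → ι → ℂ) :
    ∑ k, Matrix.diagonal (f k) = Matrix.diagonal (fun j => ∑ k, f k j) := by
  ext i j; by_cases h : i = j <;> simp [Matrix.sum_apply, Matrix.diagonal_apply, h]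

lemma ct_t {ι : Type} [Fintype ι] (A : Matrix ι ι ℂ) : (Aᵀ)ᴴ = (Aᴴ)ᵀ := by
  ext i j; simp

lemma nk_core {ι : Type} [Fintype ι] [DecidableEq ι] {M : ℕ}
    (S1 S2 XG G : Matrix ι ι ℂ) (lt1 lt2 : ι → ℝ)
    (hS1a : S1ᴴ * S1 = 1) (hS1b : S1 * S1ᴴ = 1)
    (hS2a : S2ᴴ * S2 = 1) (hS2b : S2 * S2ᴴ = 1)
    (Γ : Fin M → ι → ℂ)
    (hΓ : ∀ J, ∑ k, star (Γ k J) * Γ k J = 1)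
    (hGram : ∀ J J', XG J J' = G J J' * ∑ k, star (Γ k J) * Γ k J')
    (hG : S2 * diagonal (fun m => (lt2 m : ℂ)) * S2ᴴ = G)
    (hXG : S1ᴴ * XG * S1 = diagonal (fun I => (lt1 I : ℂ))) :
    (∀ I, ∑ m, ∑ k, Complex.normSq ((S1ᵀ * diagonal (Γ k) * S2ᴴᵀ) I m) = 1) ∧
    (∀ m, ∑ I, ∑ k, Complex.normSq ((S1ᵀ * diagonal (Γ k) * S2ᴴᵀ) I m) = 1) ∧
    (∀ I, lt1 I = ∑ m, (∑ k, Complex.normSq ((S1ᵀ * diagonal (Γ k) * S2ᴴᵀ) I m)) * lt2 m) := by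
  classical
  set F : Fin M → Matrix ι ι ℂ := fun k => S1ᵀ * diagonal (Γ k) * S2ᴴᵀ with hF
  -- transposed unitary identities
  have hS1Ta : S1ᵀ * S1ᴴᵀ = 1 := by rw [← Matrix.transpose_mul, hS1a, Matrix.transpose_one]
  have hS1Tb : S1ᴴᵀ * S1ᵀ = 1 := by rw [← Matrix.transpose_mul, hS1b, Matrix.transpose_one]
  have hS2Ta : S2ᵀ * S2ᴴᵀ = 1 := by rw [← Matrix.transpose_mul, hS2a, Matrix.transpose_one]
  have hS2Tb : S2ᴴᵀ * S2ᵀ = 1 := by rw [← Matrix.transpose_mul, hS2b, Matrix.transpose_one]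
  have hFct : ∀ k, (F k)ᴴ = S2ᵀ * (diagonal (fun J => star (Γ k J)) * S1ᴴᵀ) := by
    intro k
    rw [hF]
    simp only [Matrix.conjTranspose_mul, ct_t, Matrix.conjTranspose_conjTranspose,
      Matrix.diagonal_conjTranspose, Matrix.mul_assoc]
    rfl
  -- sum of diagonal products
  have hDD : ∑ k, diagonal (Γ k) * diagonal (fun J => star (Γ k J)) = (1 : Matrix ι ι ℂ) := by
    simp only [Matrix.diagonal_mul_diagonal]
    rw [diagSumC]
    have : (fun j => ∑ k, Γ k j * star (Γ k j)) = fun _ => (1:ℂ) := by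
      funext j
      rw [← hΓ j]
      exact Finset.sum_congr rfl fun k _ => mul_comm _ _
    rw [this, Matrix.diagonal_one]
  have hDDrev : ∑ k, diagonal (fun J => star (Γ k J)) * diagonal (Γ k) = (1 : Matrix ι ι ℂ) := by
    simp only [Matrix.diagonal_mul_diagonal]
    rw [diagSumC]
    have : (fun j => ∑ k, star (Γ k j) * Γ k j) = fun _ => (1:ℂ) := by
      funext j; rw [← hΓ j]
    rw [this, Matrix.diagonal_one]
  -- (a) : ∑ₖ F k * (F k)ᴴ = 1
  have hFFa : ∑ k, F k * (F k)ᴴ = (1 : Matrix ι ι ℂ) := by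
    have step : ∀ k, F k * (F k)ᴴ
        = S1ᵀ * ((diagonal (Γ k) * diagonal (fun J => star (Γ k J))) * S1ᴴᵀ) := by
      intro k
      rw [hFct, hF]
      calc S1ᵀ * diagonal (Γ k) * S2ᴴᵀ * (S2ᵀ * (diagonal (fun J => star (Γ k J)) * S1ᴴᵀ))
          = S1ᵀ * (diagonal (Γ k) * ((S2ᴴᵀ * S2ᵀ) * (diagonal (fun J => star (Γ k J)) * S1ᴴᵀ))) := by
            simp only [Matrix.mul_assoc]
        _ = _ := by rw [hS2Tb, Matrix.one_mul, Matrix.mul_assoc]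
    rw [Finset.sum_congr rfl fun k _ => step k, ← Finset.mul_sum, ← Finset.sum_mul, hDD,
      Matrix.one_mul, hS1Ta]
  -- (b) : ∑ₖ (F k)ᴴ * F k = 1
  have hFFb : ∑ k, (F k)ᴴ * F k = (1 : Matrix ι ι ℂ) := by
    have step : ∀ k, (F k)ᴴ * F k
        = S2ᵀ * ((diagonal (fun J => star (Γ k J)) * diagonal (Γ k)) * S2ᴴᵀ) := by
      intro k
      rw [hFct, hF]
      calc S2ᵀ * (diagonal (fun J => star (Γ k J)) * S1ᴴᵀ) * (S1ᵀ * diagonal (Γ k) * S2ᴴᵀ)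
          = S2ᵀ * (diagonal (fun J => star (Γ k J)) * ((S1ᴴᵀ * S1ᵀ) * (diagonal (Γ k) * S2ᴴᵀ))) := by
            simp only [Matrix.mul_assoc]
        _ = _ := by rw [hS1Tb, Matrix.one_mul, Matrix.mul_assoc]
    rw [Finset.sum_congr rfl fun k _ => step k, ← Finset.mul_sum, ← Finset.sum_mul, hDDrev,
      Matrix.one_mul, hS2Ta]
  -- (c) : ∑ₖ F k * diagonal lt2 * (F k)ᴴ = diagonal lt1
  have hGT : S2ᴴᵀ * diagonal (fun m => (lt2 m : ℂ)) * S2ᵀ = Gᵀ := by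
    rw [← hG, Matrix.transpose_mul, Matrix.transpose_mul, Matrix.diagonal_transpose]
    exact Matrix.mul_assoc _ _ _
  have hmid : ∑ k, diagonal (Γ k) * Gᵀ * diagonal (fun J => star (Γ k J)) = XGᵀ := by
    ext J J'
    rw [Matrix.sum_apply]
    have : ∀ k, (diagonal (Γ k) * Gᵀ * diagonal (fun J => star (Γ k J))) J J'
        = Γ k J * G J' J * star (Γ k J') := by
      intro k
      rw [Matrix.mul_diagonal, Matrix.diagonal_mul]
      rfl
    rw [Finset.sum_congr rfl fun k _ => this k]
    rw [Matrix.transpose_apply, hGram J' J, Finset.mul_sum]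
    exact Finset.sum_congr rfl fun k _ => by ring
  have hFFc : ∑ k, F k * diagonal (fun m => (lt2 m : ℂ)) * (F k)ᴴ
      = diagonal (fun I => (lt1 I : ℂ)) := by
    have step : ∀ k, F k * diagonal (fun m => (lt2 m : ℂ)) * (F k)ᴴ
        = S1ᵀ * ((diagonal (Γ k) * Gᵀ * diagonal (fun J => star (Γ k J))) * S1ᴴᵀ) := by
      intro k
      rw [hFct, hF, ← hGT]
      simp only [Matrix.mul_assoc]
    rw [Finset.sum_congr rfl fun k _ => step k, ← Finset.mul_sum, ← Finset.sum_mul, hmid]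
    calc S1ᵀ * (XGᵀ * S1ᴴᵀ) = (S1ᴴ * XG * S1)ᵀ := by
          rw [Matrix.transpose_mul (S1ᴴ * XG) S1, Matrix.transpose_mul S1ᴴ XG]
      _ = (diagonal (fun I => (lt1 I : ℂ)))ᵀ := by rw [hXG]
      _ = diagonal (fun I => (lt1 I : ℂ)) := Matrix.diagonal_transpose _
  -- entrywise extraction
  have hentry_a : ∀ k I, (F k * (F k)ᴴ) I I = ((∑ m, Complex.normSq (F k I m) : ℝ) : ℂ) := by
    intro k I
    rw [Matrix.mul_apply]
    push_cast
    exact Finset.sum_congr rfl fun m _ => by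
      rw [Matrix.conjTranspose_apply, ← Complex.mul_conj]; rfl
  have hentry_b : ∀ k m, ((F k)ᴴ * F k) m m = ((∑ I, Complex.normSq (F k I m) : ℝ) : ℂ) := by
    intro k m
    rw [Matrix.mul_apply]
    push_cast
    exact Finset.sum_congr rfl fun I _ => by
      rw [Matrix.conjTranspose_apply, ← Complex.mul_conj]
      rw [mul_comm]; rfl
  have hentry_c : ∀ k I, (F k * diagonal (fun m => (lt2 m : ℂ)) * (F k)ᴴ) I I
      = ((∑ m, Complex.normSq (F k I m) * lt2 m : ℝ) : ℂ) := by
    intro k I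
    rw [Matrix.mul_apply]
    push_cast
    refine Finset.sum_congr rfl fun m _ => ?_
    rw [Matrix.conjTranspose_apply, Matrix.mul_diagonal]
    rw [← Complex.mul_conj]
    ring_nf
    rfl
  refine ⟨fun I => ?_, fun m => ?_, fun I => ?_⟩
  · have := congrArg (fun Mt : Matrix ι ι ℂ => Mt I I) hFFa
    simp only [Matrix.sum_apply] at this
    rw [Finset.sum_congr rfl fun k _ => hentry_a k I] at this
    rw [← Complex.ofReal_sum] at this
    have h1 : (1 : Matrix ι ι ℂ) I I = 1 := by simp [Matrix.one_apply]
    rw [h1] at this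
    have := Complex.ofReal_eq_one.mp this
    rw [← this, Finset.sum_comm]
  · have := congrArg (fun Mt : Matrix ι ι ℂ => Mt m m) hFFb
    simp only [Matrix.sum_apply] at this
    rw [Finset.sum_congr rfl fun k _ => hentry_b k m] at this
    rw [← Complex.ofReal_sum] at this
    have h1 : (1 : Matrix ι ι ℂ) m m = 1 := by simp [Matrix.one_apply]
    rw [h1] at this
    have := Complex.ofReal_eq_one.mp this
    rw [← this, Finset.sum_comm]
  · have := congrArg (fun Mt : Matrix ι ι ℂ => Mt I I) hFFc
    simp only [Matrix.sum_apply] at this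
    rw [Finset.sum_congr rfl fun k _ => hentry_c k I] at this
    rw [← Complex.ofReal_sum] at this
    have h1 : diagonal (fun I => (lt1 I : ℂ)) I I = ((lt1 I : ℝ) : ℂ) := by
      simp [Matrix.diagonal_apply]
    rw [h1] at this
    have heq := Complex.ofReal_inj.mp this
    rw [← heq, Finset.sum_comm]
    exact Finset.sum_congr rfl fun m _ => by rw [Finset.sum_mul]

end AuxLemmas

/-- **Theorem 3.**  If a deterministic transformation takes the unit vectors
`ψ1 j` to the unit vectors `ψ2 j`, then for every probability vector `q` the
ensemble density matrices `ρ₁(q) = Σ q_j |ψ¹_j⟩⟨ψ¹_j|` and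
`ρ₂(q) = Σ q_j |ψ²_j⟩⟨ψ²_j|` satisfy `λ(ρ₁(q)) ≺ λ(ρ₂(q))`. -/
theorem theorem3_deterministic_majorization {D N M : ℕ}
    (ψ1 ψ2 : Fin N → (Fin D → ℂ))
    (hψ1unit : ∀ j, star (ψ1 j) ⬝ᵥ ψ1 j = 1)
    (hψ2unit : ∀ j, star (ψ2 j) ⬝ᵥ ψ2 j = 1)
    (A : Fin M → Matrix (Fin D) (Fin D) ℂ)
    (c : Fin M → Fin N → ℂ)
    (hA1 : ∑ k, (A k)ᴴ * A k = 1)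
    (hAct : ∀ k j, (A k) *ᵥ ψ1 j = c k j • ψ2 j)
    (hc : ∀ j, ∑ k, ‖c k j‖ ^ 2 = 1) :
    ∀ (q : Fin N → ℝ), (∀ j, 0 ≤ q j) → (∑ j, q j = 1) →
      ∀ (h1 : (∑ j, (q j : ℂ) • Matrix.vecMulVec (ψ1 j) (star (ψ1 j))).IsHermitian)
        (h2 : (∑ j, (q j : ℂ) • Matrix.vecMulVec (ψ2 j) (star (ψ2 j))).IsHermitian),
        MajorizedBy h1.eigenvalues h2.eigenvalues := by
  intro q hq0 hq1 h1 h2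
  classical
  have hN : N ≠ 0 := by
    rintro rfl
    simp at hq1
  have hM : M ≠ 0 := by
    rintro rfl
    have := hc ⟨0, Nat.pos_of_ne_zero hN⟩
    simp at this
  obtain ⟨k₀⟩ : Nonempty (Fin M) := ⟨⟨0, Nat.pos_of_ne_zero hM⟩⟩
  set X : Matrix (Fin D) (Fin D ⊕ Fin N) ℂ :=
    fun d J => Sum.elim (fun _ => 0) (fun j => (Real.sqrt (q j) : ℂ) * ψ1 j d) J with hX
  set Y : Matrix (Fin D) (Fin D ⊕ Fin N) ℂ :=
    fun d J => Sum.elim (fun _ => 0) (fun j => (Real.sqrt (q j) : ℂ) * ψ2 j d) J with hY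
  set Γ : Fin M → (Fin D ⊕ Fin N) → ℂ :=
    fun k J => Sum.elim (fun _ : Fin D => if k = k₀ then 1 else 0) (fun j => c k j) J with hΓ
  have hXX : X * Xᴴ = ∑ j, (q j : ℂ) • Matrix.vecMulVec (ψ1 j) (star (ψ1 j)) :=
    ensemble_matrix_eq ψ1 q hq0 X hX
  have hYY : Y * Yᴴ = ∑ j, (q j : ℂ) • Matrix.vecMulVec (ψ2 j) (star (ψ2 j)) :=
    ensemble_matrix_eq ψ2 q hq0 Y hY
  have hiden : ∀ j j' : Fin N, star (ψ1 j) ⬝ᵥ ψ1 j'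
      = (∑ k, star (c k j) * c k j') * (star (ψ2 j) ⬝ᵥ ψ2 j') :=
    inner_transfer ψ1 ψ2 A c hA1 hAct
  have hΓunit : ∀ J, ∑ k, star (Γ k J) * Γ k J = 1 := by
    intro J
    match J with
    | Sum.inl i => simp [hΓ, apply_ite]
    | Sum.inr j =>
      have : ∀ k, star (c k j) * c k j = ((‖c k j‖^2 : ℝ) : ℂ) := by
        intro k
        rw [RCLike.star_def, ← Complex.normSq_eq_conj_mul_self]
        rw [Complex.normSq_eq_norm_sq]
      simp only [hΓ, Sum.elim_inr]
      rw [Finset.sum_congr rfl fun k _ => this k, ← Complex.ofReal_sum, hc j,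
        Complex.ofReal_one]
  have hGram : ∀ J J' : Fin D ⊕ Fin N,
      (Xᴴ * X) J J' = (Yᴴ * Y) J J' * (∑ k, star (Γ k J) * Γ k J') := by
    intro J J'
    match J, J' with
    | Sum.inl i, Sum.inl i' =>
      rw [Matrix.mul_apply, Matrix.mul_apply]
      simp only [Matrix.conjTranspose_apply]; simp [hX, hY, Matrix.conjTranspose_apply]
    | Sum.inl i, Sum.inr j' =>
      rw [Matrix.mul_apply, Matrix.mul_apply]
      simp only [Matrix.conjTranspose_apply]; simp [hX, hY, Matrix.conjTranspose_apply]
    | Sum.inr j, Sum.inl i' =>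
      rw [Matrix.mul_apply, Matrix.mul_apply]
      simp only [Matrix.conjTranspose_apply]; simp [hX, hY, Matrix.conjTranspose_apply]
    | Sum.inr j, Sum.inr j' =>
      have l1 : (Xᴴ * X) (Sum.inr j) (Sum.inr j')
          = ((Real.sqrt (q j) : ℂ) * (Real.sqrt (q j') : ℂ)) * (star (ψ1 j) ⬝ᵥ ψ1 j') := by
        rw [Matrix.mul_apply, dotProduct, Finset.mul_sum]
        refine Finset.sum_congr rfl fun d _ => ?_
        simp only [Matrix.conjTranspose_apply]
        simp only [hX, Matrix.conjTranspose_apply, Sum.elim_inr, star_mul',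
          Complex.star_def, Complex.conj_ofReal, Pi.star_apply]
        ring
      have l2 : (Yᴴ * Y) (Sum.inr j) (Sum.inr j')
          = ((Real.sqrt (q j) : ℂ) * (Real.sqrt (q j') : ℂ)) * (star (ψ2 j) ⬝ᵥ ψ2 j') := by
        rw [Matrix.mul_apply, dotProduct, Finset.mul_sum]
        refine Finset.sum_congr rfl fun d _ => ?_
        simp only [Matrix.conjTranspose_apply]
        simp only [hY, Matrix.conjTranspose_apply, Sum.elim_inr, star_mul',
          Complex.star_def, Complex.conj_ofReal, Pi.star_apply]
        ring
      rw [l1, l2, hiden j j']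
      have : ∑ k, star (Γ k (Sum.inr j)) * Γ k (Sum.inr j') = ∑ k, star (c k j) * c k j' := by
        refine Finset.sum_congr rfl fun k _ => ?_
        simp [hΓ]
      rw [this]
      ring
  -- eigenvalues
  set lam1 := h1.eigenvalues with hlam1
  set lam2 := h2.eigenvalues with hlam2
  have hlam1nn : ∀ i, 0 ≤ lam1 i := fun i =>
    (hXX ▸ Matrix.posSemidef_self_mul_conjTranspose X).eigenvalues_nonneg i
  have hlam2nn : ∀ i, 0 ≤ lam2 i := fun i =>
    (hYY ▸ Matrix.posSemidef_self_mul_conjTranspose Y).eigenvalues_nonneg i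
  set lt1 : Fin D ⊕ Fin N → ℝ := Sum.elim lam1 (fun _ => 0) with hlt1
  set lt2 : Fin D ⊕ Fin N → ℝ := Sum.elim lam2 (fun _ => 0) with hlt2
  set E1 : Matrix (Fin D) (Fin D ⊕ Fin N) ℂ :=
    fun d J => Sum.elim (fun i => ((h1.eigenvectorUnitary : Matrix (Fin D) (Fin D) ℂ) *
      diagonal (fun i' => (Real.sqrt (lam1 i') : ℂ))) d i) (fun _ => 0) J with hE1
  set E2 : Matrix (Fin D) (Fin D ⊕ Fin N) ℂ :=
    fun d J => Sum.elim (fun i => ((h2.eigenvectorUnitary : Matrix (Fin D) (Fin D) ℂ) *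
      diagonal (fun i' => (Real.sqrt (lam2 i') : ℂ))) d i) (fun _ => 0) J with hE2
  obtain ⟨hE1spec, hE1diag⟩ := spectral_ensemble _ h1 hlam1nn E1 hE1
  obtain ⟨hE2spec, hE2diag⟩ := spectral_ensemble _ h2 hlam2nn E2 hE2
  obtain ⟨S1, hS1a, hS1b, hS1e⟩ := ensemble_unitary X E1 (by rw [hXX, hE1spec])
  obtain ⟨S2, hS2a, hS2b, hS2e⟩ := ensemble_unitary Y E2 (by rw [hYY, hE2spec])
  -- hypotheses of nk_core
  have hXG : S1ᴴ * (Xᴴ * X) * S1 = diagonal (fun I => (lt1 I : ℂ)) := by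
    have : E1ᴴ * E1 = S1ᴴ * (Xᴴ * X) * S1 := by
      rw [hS1e, Matrix.conjTranspose_mul]
      simp only [Matrix.mul_assoc]
    rw [← this, hE1diag]
  have hG : S2 * diagonal (fun m => (lt2 m : ℂ)) * S2ᴴ = Yᴴ * Y := by
    have h' : E2ᴴ * E2 = S2ᴴ * ((Yᴴ * Y) * S2) := by
      rw [hS2e, Matrix.conjTranspose_mul]
      simp only [Matrix.mul_assoc]
    have hd : diagonal (fun m => (lt2 m : ℂ)) = S2ᴴ * ((Yᴴ * Y) * S2) := by
      rw [← h', hE2diag]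
    rw [hd]
    calc S2 * (S2ᴴ * ((Yᴴ * Y) * S2)) * S2ᴴ
        = (S2 * S2ᴴ) * (Yᴴ * Y) * (S2 * S2ᴴ) := by simp only [Matrix.mul_assoc]
      _ = Yᴴ * Y := by rw [hS2b, Matrix.one_mul, Matrix.mul_one]
  obtain ⟨hrow, hcol, hrel⟩ := nk_core S1 S2 (Xᴴ * X) (Yᴴ * Y) lt1 lt2 hS1a hS1b hS2a hS2b
    Γ hΓunit hGram hG hXG
  set 𝔇 : (Fin D ⊕ Fin N) → (Fin D ⊕ Fin N) → ℝ :=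
    fun I m => ∑ k, Complex.normSq ((S1ᵀ * diagonal (Γ k) * S2ᴴᵀ) I m) with h𝔇
  have h𝔇nn : ∀ I m, 0 ≤ 𝔇 I m := fun I m =>
    Finset.sum_nonneg fun k _ => Complex.normSq_nonneg _
  -- conclude
  constructor
  · intro k hk
    apply kMaxSum_le lam1 hk
    intro S hS
    set t : Fin D → ℝ := fun m => ∑ i ∈ S, 𝔇 (Sum.inl i) (Sum.inl m) with ht
    have hsum : ∑ i ∈ S, lam1 i = ∑ m, t m * lam2 m := by
      have e1 : ∀ i, lam1 i = ∑ mm : Fin D ⊕ Fin N, 𝔇 (Sum.inl i) mm * lt2 mm := fun i =>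
        hrel (Sum.inl i)
      calc ∑ i ∈ S, lam1 i = ∑ i ∈ S, ∑ mm : Fin D ⊕ Fin N, 𝔇 (Sum.inl i) mm * lt2 mm :=
            Finset.sum_congr rfl fun i _ => e1 i
        _ = ∑ mm : Fin D ⊕ Fin N, ∑ i ∈ S, 𝔇 (Sum.inl i) mm * lt2 mm := Finset.sum_comm
        _ = ∑ m : Fin D, ∑ i ∈ S, 𝔇 (Sum.inl i) (Sum.inl m) * lam2 m := by
            rw [Fintype.sum_sum_type]
            simp [hlt2]
        _ = ∑ m, t m * lam2 m := by
            refine Finset.sum_congr rfl fun m _ => ?_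
            rw [ht, Finset.sum_mul]
    rw [hsum]
    apply frac_le_kMaxSum lam2 hlam2nn t ?_ ?_ ?_ hk
    · intro m
      exact Finset.sum_nonneg fun i _ => h𝔇nn _ _
    · intro m
      have hb : ∑ i ∈ S, 𝔇 (Sum.inl i) (Sum.inl m)
          ≤ ∑ i : Fin D, 𝔇 (Sum.inl i) (Sum.inl m) :=
        Finset.sum_le_sum_of_subset_of_nonneg (Finset.subset_univ S)
          (fun i _ _ => h𝔇nn _ _)
      have hb2 : ∑ i : Fin D, 𝔇 (Sum.inl i) (Sum.inl m)
          ≤ ∑ I : Fin D ⊕ Fin N, 𝔇 I (Sum.inl m) := by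
        rw [Fintype.sum_sum_type]
        exact le_add_of_nonneg_right (Finset.sum_nonneg fun j _ => h𝔇nn _ _)
      calc t m ≤ ∑ I : Fin D ⊕ Fin N, 𝔇 I (Sum.inl m) := le_trans hb hb2
        _ = 1 := hcol (Sum.inl m)
    · have e2 : ∑ m : Fin D, t m ≤ ∑ mm : Fin D ⊕ Fin N, ∑ i ∈ S, 𝔇 (Sum.inl i) mm := by
        rw [Fintype.sum_sum_type]
        exact le_add_of_nonneg_right (Finset.sum_nonneg fun j _ =>
          Finset.sum_nonneg fun i _ => h𝔇nn _ _)
      have e3 : ∑ mm : Fin D ⊕ Fin N, ∑ i ∈ S, 𝔇 (Sum.inl i) mm = (S.card : ℝ) := by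
        rw [Finset.sum_comm]
        rw [Finset.sum_congr rfl fun i _ => hrow (Sum.inl i)]
        simp
      rw [hS] at e3
      rw [← e3]
      exact e2
  · have e1 : ∑ i, lam1 i = ∑ I : Fin D ⊕ Fin N, lt1 I := by
      rw [Fintype.sum_sum_type]
      simp [hlt1]
    have e2 : ∑ i, lam2 i = ∑ I : Fin D ⊕ Fin N, lt2 I := by
      rw [Fintype.sum_sum_type]
      simp [hlt2]
    rw [e1, e2]
    calc ∑ I : Fin D ⊕ Fin N, lt1 I
        = ∑ I : Fin D ⊕ Fin N, ∑ mm : Fin D ⊕ Fin N, 𝔇 I mm * lt2 mm :=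
          Finset.sum_congr rfl fun I _ => hrel I
      _ = ∑ mm : Fin D ⊕ Fin N, (∑ I : Fin D ⊕ Fin N, 𝔇 I mm) * lt2 mm := by
          rw [Finset.sum_comm]
          exact Finset.sum_congr rfl fun mm _ => by rw [Finset.sum_mul]
      _ = ∑ mm : Fin D ⊕ Fin N, lt2 mm := by
          refine Finset.sum_congr rfl fun mm _ => ?_
          rw [hcol mm, one_mul]
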